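/- arXiv:2505.16236 — 2 statements merged into one kernel-verified Lean document; each statement's English description precedes it below -/
import Mathlib

section
/- Let a, a_i ∈ ℝ³ and b, b_i > 0. Define M(a,b | a_i,b_i) = b_i^{-1}(a a_iᵀ + a_i aᵀ) − b b_i^{-2} a_i a_iᵀ. Then (1/b)·a aᵀ ⪰ M(a,b | a_i,b_i), with M(a_i,b_i | a_i,b_i) = (1/b_i)·a_i a_iᵀ. -/
open Matrix

lemma psd_vmv (v : Fin 3 → ℝ) : (vecMulVec v v).PosSemidef := by
  rw [posSemidef_iff_dotProduct_mulVec]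
  constructor
  · ext i j
    simp [vecMulVec, mul_comm]
  · intro x
    have h : (vecMulVec v v) *ᵥ x = fun i => v i * (v ⬝ᵥ x) := by
      ext i
      simp [vecMulVec, mulVec, dotProduct, Finset.mul_sum, mul_assoc]
    rw [h]
    have : (star x) ⬝ᵥ (fun i => v i * (v ⬝ᵥ x)) = (v ⬝ᵥ x) * (v ⬝ᵥ x) := by
      simp [dotProduct, Finset.sum_mul]
      ring_nf
      congr 1
      ext i
      ring
    rw [this]
    exact mul_self_nonneg _

lemma psd_smul {M : Matrix (Fin 3) (Fin 3) ℝ} (h : M.PosSemidef) {r : ℝ} (hr : 0 ≤ r) :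
    (r • M).PosSemidef := by
  rw [posSemidef_iff_dotProduct_mulVec]
  constructor
  · have := h.1
    ext i j
    simp [Matrix.IsHermitian, Matrix.smul_apply]
    left
    exact congrFun (congrFun this.symm j) i
  · intro x
    rw [smul_mulVec, dotProduct_smul]
    exact mul_nonneg hr ((posSemidef_iff_dotProduct_mulVec.mp h).2 x)

theorem stmt_9 (a ai : Fin 3 → ℝ) (b bi : ℝ) (hb : 0 < b) (hbi : 0 < bi) :
    ((1 / b) • vecMulVec a a -
        (bi⁻¹ • (vecMulVec a ai + vecMulVec ai a) - (b / bi ^ 2) • vecMulVec ai ai)).PosSemidef ∧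
    bi⁻¹ • (vecMulVec ai ai + vecMulVec ai ai) - (bi / bi ^ 2) • vecMulVec ai ai
      = (1 / bi) • vecMulVec ai ai := by
  constructor
  · have key : (1 / b) • vecMulVec a a -
        (bi⁻¹ • (vecMulVec a ai + vecMulVec ai a) - (b / bi ^ 2) • vecMulVec ai ai)
        = (1 / b) • vecMulVec (a - (b / bi) • ai) (a - (b / bi) • ai) := by
      ext i j
      simp [vecMulVec, Matrix.sub_apply, Matrix.add_apply, Matrix.smul_apply]
      field_simp
      ring
    rw [key]
    exact psd_smul (psd_vmv _) (by positivity)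
  · ext i j
    simp [vecMulVec, Matrix.sub_apply, Matrix.add_apply, Matrix.smul_apply]
    field_simp
    ring
end

section
/- Let A be a 2×2 symmetric block matrix [[Λ₁, Λ₂],[Λ₂ᵀ, Λ₃]] of real matrices with A ⪰ 0, and let B, T be symmetric positive definite with [[B, I],[I, T]] ⪰ 0, Λ₃ = I, and A·[[B, I],[I, T]] = 0. Then Λ₁ = (B^{-1})², Λ₂ = −B^{-1}, and T = B^{-1}. -/
open Matrix

theorem stmt_10 (n : ℕ) (L1 L2 L3 B T : Matrix (Fin n) (Fin n) ℝ)
    (hL : (Matrix.fromBlocks L1 L2 L2ᵀ L3).PosSemidef)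
    (hB : B.PosDef) (hT : T.PosDef)
    (hBT : (Matrix.fromBlocks B 1 1 T).PosSemidef)
    (hL3 : L3 = 1)
    (hcs : Matrix.fromBlocks L1 L2 L2ᵀ L3 * Matrix.fromBlocks B 1 1 T = 0) :
    L1 = (B⁻¹) ^ 2 ∧ L2 = -B⁻¹ ∧ T = B⁻¹ := by
  subst hL3
  rw [Matrix.fromBlocks_multiply] at hcs
  have h11 : L1 * B + L2 * 1 = 0 := by
    have := congrArg Matrix.toBlocks₁₁ hcs
    ext i j
    simpa [Matrix.toBlocks_fromBlocks₁₁, Matrix.toBlocks₁₁] using congrFun (congrFun this i) j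
  have h21 : L2ᵀ * B + 1 * 1 = 0 := by
    have := congrArg Matrix.toBlocks₂₁ hcs
    ext i j
    simpa [Matrix.toBlocks_fromBlocks₂₁, Matrix.toBlocks₂₁] using congrFun (congrFun this i) j
  have h22 : L2ᵀ * 1 + 1 * T = 0 := by
    have := congrArg Matrix.toBlocks₂₂ hcs
    ext i j
    simpa [Matrix.toBlocks_fromBlocks₂₂, Matrix.toBlocks₂₂] using congrFun (congrFun this i) j
  rw [Matrix.mul_one, Matrix.one_mul] at h22
  have hL2T : L2ᵀ = -T := by linear_combination (norm := noncomm_ring) h22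
  have hTB : T * B = 1 := by
    have : (-T) * B + 1 = 0 := by rw [← hL2T]; simpa using h21
    linear_combination (norm := noncomm_ring) -this
  have hBinv : B⁻¹ = T := Matrix.inv_eq_left_inv hTB
  have hTsymm : Tᵀ = T := hT.isHermitian
  have hL2 : L2 = -T := by
    have := congrArg Matrix.transpose hL2T
    simpa [hTsymm] using this
  have hBB : B * B⁻¹ = 1 := Matrix.mul_nonsing_inv B (isUnit_iff_ne_zero.mpr hB.det_pos.ne')
  have hL1 : L1 = T * T := by
    have hL1B : L1 * B = T := by
      rw [Matrix.mul_one, hL2] at h11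
      linear_combination (norm := noncomm_ring) h11
    calc L1 = L1 * B * B⁻¹ := by rw [Matrix.mul_assoc, hBB, Matrix.mul_one]
    _ = T * T := by rw [hL1B, hBinv]
  refine ⟨?_, ?_, hBinv.symm⟩
  · rw [hL1, hBinv, pow_two]
  · rw [hL2, hBinv]
end
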